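/- Let D be a 2-(v,k,λ) design of order n, p a prime with p | n, p ∤ λ, and p² ∤ n. Then the dual code C_p(D)^⊥ is contained in C_p(D), and consequently rank_p(D) ≥ v/2. -/

import Mathlib

open Matrix Finset

theorem klemm_orth
    (p : ℕ) [hp : Fact p.Prime]
    (v b lam r : ℕ)
    (B : Fin b → Finset (Fin v))
    (hpair : ∀ x y : Fin v, x ≠ y →
      (Finset.univ.filter (fun i => x ∈ B i ∧ y ∈ B i)).card = lam)
    (hr : ∀ x : Fin v, (Finset.univ.filter (fun i => x ∈ B i)).card = r)
    (hrlam : lam < r)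
    (hn : p ∣ (r - lam)) (hnl : ¬ p ∣ lam) (hn2 : ¬ p ^ 2 ∣ (r - lam))
    (A : Matrix (Fin b) (Fin v) (ZMod p))
    (hA : ∀ i j, A i j = if j ∈ B i then 1 else 0)
    (x y : Fin v → ZMod p)
    (hx : ∀ i, x ⬝ᵥ A i = 0) (hy : ∀ i, y ⬝ᵥ A i = 0) :
    x ⬝ᵥ y = 0 := by
  classical
  set N : Matrix (Fin b) (Fin v) ℤ := fun i j => if j ∈ B i then 1 else 0 with hN
  set X : Fin v → ℤ := fun j => ((x j).val : ℤ) with hX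
  set Y : Fin v → ℤ := fun j => ((y j).val : ℤ) with hY
  have castX : ∀ j, ((X j : ℤ) : ZMod p) = x j := by
    intro j; simp [hX, ZMod.natCast_val, ZMod.cast_id]
  have castY : ∀ j, ((Y j : ℤ) : ZMod p) = y j := by
    intro j; simp [hY, ZMod.natCast_val, ZMod.cast_id]
  have castN : ∀ i j, ((N i j : ℤ) : ZMod p) = A i j := by
    intro i j; by_cases h : j ∈ B i <;> simp [hN, hA, h]
  -- entries of N *ᵥ X are divisible by p
  have hdvd : ∀ (Z : Fin v → ℤ) (z : Fin v → ZMod p),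
      (∀ j, ((Z j : ℤ) : ZMod p) = z j) → (∀ i, z ⬝ᵥ A i = 0) →
      ∀ i, (p : ℤ) ∣ (N *ᵥ Z) i := by
    intro Z z hZ hz i
    have : (((N *ᵥ Z) i : ℤ) : ZMod p) = 0 := by
      simp only [Matrix.mulVec, dotProduct]
      push_cast
      rw [show (∑ j, ((N i j : ℤ) : ZMod p) * ((Z j : ℤ) : ZMod p))
          = ∑ j, z j * A i j from Finset.sum_congr rfl fun j _ => by
            rw [castN, hZ, mul_comm]]
      exact hz i
    exact (ZMod.intCast_zmod_eq_zero_iff_dvd _ p).mp this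
  have hdX := hdvd X x castX hx
  have hdY := hdvd Y y castY hy
  -- column sums
  have hcol : ∀ j, (∑ i, N i j) = (r : ℤ) := by
    intro j
    simp only [hN, Finset.sum_boole]
    exact_mod_cast congrArg (Nat.cast : ℕ → ℤ) (hr j)
  -- p ∣ ∑ Z
  have hpZ : Prime (p : ℤ) := Nat.prime_iff_prime_int.mp hp.out
  have hrl : (p : ℤ) ∣ ((r : ℤ) - lam) := by
    have := Int.natCast_dvd_natCast.mpr hn
    rwa [Nat.cast_sub hrlam.le] at this
  have hsum : ∀ (Z : Fin v → ℤ), (∀ i, (p : ℤ) ∣ (N *ᵥ Z) i) → (p : ℤ) ∣ ∑ j, Z j := by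
    intro Z hd
    have h1 : (∑ i, (N *ᵥ Z) i) = (r : ℤ) * ∑ j, Z j := by
      simp only [Matrix.mulVec, dotProduct]
      rw [Finset.sum_comm, Finset.mul_sum]
      refine Finset.sum_congr rfl fun j _ => ?_
      rw [← Finset.sum_mul, hcol]
    have h2 : (p : ℤ) ∣ (r : ℤ) * ∑ j, Z j := h1 ▸ Finset.dvd_sum fun i _ => hd i
    have h3 : (p : ℤ) ∣ (lam : ℤ) * ∑ j, Z j := by
      have : (lam : ℤ) * ∑ j, Z j = (r : ℤ) * ∑ j, Z j - ((r : ℤ) - lam) * ∑ j, Z j := by ring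
      rw [this]
      exact dvd_sub h2 (hrl.mul_right _)
    rcases hpZ.dvd_mul.mp h3 with h | h
    · exact absurd (Int.natCast_dvd_natCast.mp h) hnl
    · exact h
  have hsX := hsum X hdX
  have hsY := hsum Y hdY
  -- the key identity
  have hNN : ∀ j j' : Fin v, (∑ i, N i j * N i j') = if j = j' then (r : ℤ) else lam := by
    intro j j'
    have he : ∀ i : Fin b, N i j * N i j' = if (j ∈ B i ∧ j' ∈ B i) then 1 else 0 := by
      intro i; by_cases h1 : j ∈ B i <;> by_cases h2 : j' ∈ B i <;> simp [hN, h1, h2]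
    rw [Finset.sum_congr rfl fun i _ => he i, Finset.sum_boole]
    by_cases h : j = j'
    · subst h; simp only [and_self, if_pos rfl]
      exact_mod_cast congrArg (Nat.cast : ℕ → ℤ) (hr j)
    · rw [if_neg h]
      exact_mod_cast congrArg (Nat.cast : ℕ → ℤ) (hpair j j' h)
  have hkey : (N *ᵥ X) ⬝ᵥ (N *ᵥ Y)
      = ((r : ℤ) - lam) * (X ⬝ᵥ Y) + (lam : ℤ) * ((∑ j, X j) * (∑ j', Y j')) := by
    have e1 : ∀ i, (N *ᵥ X) i * (N *ᵥ Y) i = ∑ j, ∑ j', (X j * Y j') * (N i j * N i j') := by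
      intro i
      simp only [Matrix.mulVec, dotProduct, Finset.sum_mul_sum]
      exact Finset.sum_congr rfl fun j _ => Finset.sum_congr rfl fun j' _ => by ring
    have expand : (N *ᵥ X) ⬝ᵥ (N *ᵥ Y)
        = ∑ j, ∑ j', (X j * Y j') * (∑ i, N i j * N i j') := by
      rw [show (N *ᵥ X) ⬝ᵥ (N *ᵥ Y) = ∑ i, (N *ᵥ X) i * (N *ᵥ Y) i from rfl,
        Finset.sum_congr rfl fun i _ => e1 i, Finset.sum_comm]
      refine Finset.sum_congr rfl fun j _ => ?_
      rw [Finset.sum_comm]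
      refine Finset.sum_congr rfl fun j' _ => ?_
      rw [Finset.mul_sum]
    rw [expand]
    have step : ∀ j : Fin v, ∑ j', (X j * Y j') * (∑ i, N i j * N i j')
        = ((lam : ℤ) * ∑ j', Y j') * X j + ((r : ℤ) - lam) * (X j * Y j) := by
      intro j
      rw [Finset.sum_congr rfl fun j' _ => by rw [hNN j j']]
      have h5 : ∀ j' : Fin v, (X j * Y j') * (if j = j' then (r : ℤ) else lam)
          = (lam : ℤ) * X j * Y j' + (if j = j' then (X j * Y j') * ((r : ℤ) - lam) else 0) := by
        intro j'; by_cases h : j = j' <;> simp [h] <;> ring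
      rw [Finset.sum_congr rfl fun j' _ => h5 j', Finset.sum_add_distrib,
        Finset.sum_ite_eq Finset.univ j (fun j' => (X j * Y j') * ((r : ℤ) - lam)),
        if_pos (Finset.mem_univ j), ← Finset.mul_sum]
      ring
    rw [Finset.sum_congr rfl fun j _ => step j, Finset.sum_add_distrib,
      ← Finset.mul_sum, ← Finset.mul_sum]
    rw [show X ⬝ᵥ Y = ∑ j, X j * Y j from rfl]
    ring
  -- divisibility
  have hp2 : ((p : ℤ))^2 ∣ ((r : ℤ) - lam) * (X ⬝ᵥ Y) := by
    have h1 : ((p : ℤ))^2 ∣ (N *ᵥ X) ⬝ᵥ (N *ᵥ Y) := by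
      refine Finset.dvd_sum fun i _ => ?_
      rw [sq]
      exact mul_dvd_mul (hdX i) (hdY i)
    have h2 : ((p : ℤ))^2 ∣ (lam : ℤ) * ((∑ j, X j) * (∑ j', Y j')) := by
      rw [sq]
      exact (mul_dvd_mul hsX hsY).mul_left _
    have : ((r : ℤ) - lam) * (X ⬝ᵥ Y)
        = (N *ᵥ X) ⬝ᵥ (N *ᵥ Y) - (lam : ℤ) * ((∑ j, X j) * (∑ j', Y j')) := by
      rw [hkey]; ring
    rw [this]
    exact dvd_sub h1 h2
  obtain ⟨m, hm⟩ := hrl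
  have hpm : ¬ (p : ℤ) ∣ m := by
    intro hd
    apply hn2
    obtain ⟨c, hc⟩ := hd
    have : ((r - lam : ℕ) : ℤ) = ((p^2 : ℕ) : ℤ) * c := by
      push_cast
      rw [Nat.cast_sub hrlam.le, hm, hc]; ring
    exact Int.natCast_dvd_natCast.mp ⟨c, this⟩
  have hdxy : (p : ℤ) ∣ X ⬝ᵥ Y := by
    have h6 : (p : ℤ) * (p : ℤ) ∣ (p : ℤ) * (m * (X ⬝ᵥ Y)) := by
      rw [show (p : ℤ) * (m * (X ⬝ᵥ Y)) = ((r : ℤ) - lam) * (X ⬝ᵥ Y) by rw [hm]; ring,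
        ← sq]
      exact hp2
    have hp0 : (p : ℤ) ≠ 0 := by exact_mod_cast hp.out.ne_zero
    have h7 : (p : ℤ) ∣ m * (X ⬝ᵥ Y) := (mul_dvd_mul_iff_left hp0).mp h6
    exact (hpZ.dvd_mul.mp h7).resolve_left hpm
  calc x ⬝ᵥ y = ((∑ j, X j * Y j : ℤ) : ZMod p) := by
        show (∑ j, x j * y j) = _
        push_cast
        exact (Finset.sum_congr rfl fun j _ => by rw [castX, castY]).symm
    _ = 0 := (ZMod.intCast_zmod_eq_zero_iff_dvd _ p).mpr hdxy

/-- (Klemm) Let `D` be a 2-(v,k,λ) design of order `n = r - λ`, and let `p`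
be a prime with `p ∣ n`, `p ∤ λ` and `p² ∤ n`.  Then the dual of the `p`-ary
block code `C_p(D)` (the row span over `𝔽_p` of the incidence matrix) is
contained in `C_p(D)`, and consequently `rank_p(D) ≥ v/2`. -/
theorem klemm_selforthogonal_dual
    (p : ℕ) [hp : Fact p.Prime]
    (v b k lam r : ℕ) (hv : 2 ≤ v) (hk : 2 ≤ k) (hlam : 1 ≤ lam)
    (B : Fin b → Finset (Fin v))
    (hcard : ∀ i, (B i).card = k)
    (hpair : ∀ x y : Fin v, x ≠ y →
      (Finset.univ.filter (fun i => x ∈ B i ∧ y ∈ B i)).card = lam)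
    (hr : ∀ x : Fin v, (Finset.univ.filter (fun i => x ∈ B i)).card = r)
    (hrlam : lam < r)
    (hn : p ∣ (r - lam)) (hnl : ¬ p ∣ lam) (hn2 : ¬ p ^ 2 ∣ (r - lam))
    (A : Matrix (Fin b) (Fin v) (ZMod p))
    (hA : ∀ i j, A i j = if j ∈ B i then 1 else 0) :
    (∀ x : Fin v → ZMod p,
      (∀ y ∈ Submodule.span (ZMod p) (Set.range fun i => A i), x ⬝ᵥ y = 0) →
        x ∈ Submodule.span (ZMod p) (Set.range fun i => A i)) ∧
    v ≤ 2 * A.rank := by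
  classical
  set C : Submodule (ZMod p) (Fin v → ZMod p) :=
    Submodule.span (ZMod p) (Set.range fun i => A i) with hC
  have key : ∀ x : Fin v → ZMod p, (∀ y ∈ C, x ⬝ᵥ y = 0) → x ∈ C := by
    intro x hx
    by_contra hmem
    obtain ⟨f, hf0, hfmap⟩ := Submodule.exists_dual_map_eq_bot_of_notMem hmem inferInstance
    set z : Fin v → ZMod p := fun j => f (Pi.single j 1) with hzdef
    have hfz : ∀ w : Fin v → ZMod p, f w = w ⬝ᵥ z := by
      intro w
      have hw : w = ∑ j, w j • (Pi.single j 1 : Fin v → ZMod p) := by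
        funext j'
        simp [Finset.sum_apply, Pi.single_apply]
      conv_lhs => rw [hw]
      rw [map_sum]
      simp only [_root_.map_smul, smul_eq_mul]
      rfl
    have hz : ∀ i, z ⬝ᵥ A i = 0 := by
      intro i
      have hAi : A i ∈ C := Submodule.subset_span ⟨i, rfl⟩
      have hfAi : f (A i) = 0 := by
        have : f (A i) ∈ C.map f := Submodule.mem_map_of_mem hAi
        rw [hfmap] at this
        exact (Submodule.mem_bot (ZMod p)).mp this
      rw [hfz] at hfAi
      rwa [dotProduct_comm] at hfAi
    have hxr : ∀ i, x ⬝ᵥ A i = 0 := fun i => hx _ (Submodule.subset_span ⟨i, rfl⟩)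
    have horth := klemm_orth p v b lam r B hpair hr hrlam hn hnl hn2 A hA x z hxr hz
    exact hf0 (by rw [hfz x]; exact horth)
  refine ⟨key, ?_⟩
  have hsub : LinearMap.ker A.mulVecLin ≤ C := by
    intro x hxk
    apply key x
    intro y hy
    induction hy using Submodule.span_induction with
    | mem y hy =>
        obtain ⟨i, rfl⟩ := hy
        have h0 : A *ᵥ x = 0 := hxk
        calc x ⬝ᵥ A i = (A *ᵥ x) i := by
              simp [Matrix.mulVec, dotProduct, mul_comm]
          _ = 0 := by rw [h0]; rfl
    | zero => simp
    | add u w _ _ hu hw => rw [dotProduct_add, hu, hw, add_zero]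
    | smul c u _ hu => rw [dotProduct_smul, hu, smul_zero]
  have h1 : Module.finrank (ZMod p) (LinearMap.ker A.mulVecLin)
      ≤ Module.finrank (ZMod p) C := Submodule.finrank_mono hsub
  have h2 : A.rank = Module.finrank (ZMod p) C := by
    rw [hC, Matrix.rank_eq_finrank_span_row]; rfl
  have h3 := LinearMap.finrank_range_add_finrank_ker A.mulVecLin
  rw [Module.finrank_pi] at h3
  simp only [Fintype.card_fin] at h3
  have h4 : Module.finrank (ZMod p) (LinearMap.range A.mulVecLin) = A.rank := rfl
  omega
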